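/- Suppose r₁ = r₃ = p and r₂ = r₄ = q with p > 5q > 0, so that K = 2(p−q) > 0. Then the set of common zeros of P and Q in ℝ² is exactly the five-point set {(0,0), (a,−a), (−a,a), (a′,a′), (−a′,−a′)}, where a = √(1 − 4q/(p−q)) satisfies 0 < a < 1 and a′ = √(5 + 4q/(p−q)) satisfies a′ > 1; in particular these five points are pairwise distinct and exactly three of them, namely (0,0), (a,−a) and (−a,a), lie in the open square S. -/
import Mathlib


noncomputable section

/-- `K = r₁ + r₃ − r₂ − r₄`. -/
def Kq (r₁ r₂ r₃ r₄ : ℝ) : ℝ := r₁ + r₃ - r₂ - r₄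

/-- `N(a₁,a₂) = a₁a₂K + a₁(K+2(r₂−r₃)) + a₂(K+2(r₄−r₃)) + K + 2(r₂+r₄)`. -/
def Nq (r₁ r₂ r₃ r₄ a₁ a₂ : ℝ) : ℝ :=
  a₁ * a₂ * Kq r₁ r₂ r₃ r₄ + a₁ * (Kq r₁ r₂ r₃ r₄ + 2 * (r₂ - r₃)) +
    a₂ * (Kq r₁ r₂ r₃ r₄ + 2 * (r₄ - r₃)) + Kq r₁ r₂ r₃ r₄ + 2 * (r₂ + r₄)

/-- `P(a₁,a₂) = 3(1−a₁²)·∂N/∂a₁ + 2a₁·N`, where `∂N/∂a₁ = a₂K + K + 2(r₂−r₃)`. -/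
def Pq (r₁ r₂ r₃ r₄ a₁ a₂ : ℝ) : ℝ :=
  3 * (1 - a₁ ^ 2) * (a₂ * Kq r₁ r₂ r₃ r₄ + (Kq r₁ r₂ r₃ r₄ + 2 * (r₂ - r₃))) +
    2 * a₁ * Nq r₁ r₂ r₃ r₄ a₁ a₂

/-- `Q(a₁,a₂) = 3(1−a₂²)·∂N/∂a₂ + 2a₂·N`, where `∂N/∂a₂ = a₁K + K + 2(r₄−r₃)`. -/
def Qq (r₁ r₂ r₃ r₄ a₁ a₂ : ℝ) : ℝ :=
  3 * (1 - a₂ ^ 2) * (a₁ * Kq r₁ r₂ r₃ r₄ + (Kq r₁ r₂ r₃ r₄ + 2 * (r₄ - r₃))) +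
    2 * a₂ * Nq r₁ r₂ r₃ r₄ a₁ a₂

/-- The open square `S = {(a₁,a₂) : |a₁| < 1, |a₂| < 1}`. -/
def Sq : Set (ℝ × ℝ) := {a | |a.1| < 1 ∧ |a.2| < 1}

/-- `G(a₁,a₂) = N(a₁,a₂)³ / ((1−a₁²)(1−a₂²))` on `S`. -/
def Gq (r₁ r₂ r₃ r₄ : ℝ) (a : ℝ × ℝ) : ℝ :=
  Nq r₁ r₂ r₃ r₄ a.1 a.2 ^ 3 / ((1 - a.1 ^ 2) * (1 - a.2 ^ 2))

set_option maxHeartbeats 1000000 in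
/-- For `r₁ = r₃ = p`, `r₂ = r₄ = q` with `p > 5q > 0`, the set of common
zeros of `P` and `Q` in `ℝ²` is exactly the five-point set
`{(0,0), (a,−a), (−a,a), (a′,a′), (−a′,−a′)}`, where `a = √(1 − 4q/(p−q)) ∈ (0,1)` and
`a′ = √(5 + 4q/(p−q)) > 1`; in particular these five points are pairwise distinct and
exactly three of them, `(0,0)`, `(a,−a)`, `(−a,a)`, lie in the open square `S`. -/
theorem stmt16 (p q : ℝ) (hq : 0 < q) (hpq : 5 * q < p) :
    {x : ℝ × ℝ | Pq p q p q x.1 x.2 = 0 ∧ Qq p q p q x.1 x.2 = 0} =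
        {((0 : ℝ), (0 : ℝ)),
          (Real.sqrt (1 - 4 * q / (p - q)), -Real.sqrt (1 - 4 * q / (p - q))),
          (-Real.sqrt (1 - 4 * q / (p - q)), Real.sqrt (1 - 4 * q / (p - q))),
          (Real.sqrt (5 + 4 * q / (p - q)), Real.sqrt (5 + 4 * q / (p - q))),
          (-Real.sqrt (5 + 4 * q / (p - q)), -Real.sqrt (5 + 4 * q / (p - q)))} ∧
      0 < Real.sqrt (1 - 4 * q / (p - q)) ∧ Real.sqrt (1 - 4 * q / (p - q)) < 1 ∧
      1 < Real.sqrt (5 + 4 * q / (p - q)) ∧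
      ({((0 : ℝ), (0 : ℝ)),
          (Real.sqrt (1 - 4 * q / (p - q)), -Real.sqrt (1 - 4 * q / (p - q))),
          (-Real.sqrt (1 - 4 * q / (p - q)), Real.sqrt (1 - 4 * q / (p - q))),
          (Real.sqrt (5 + 4 * q / (p - q)), Real.sqrt (5 + 4 * q / (p - q))),
          (-Real.sqrt (5 + 4 * q / (p - q)), -Real.sqrt (5 + 4 * q / (p - q)))} :
            Set (ℝ × ℝ)).ncard = 5 ∧
      {x : ℝ × ℝ | Pq p q p q x.1 x.2 = 0 ∧ Qq p q p q x.1 x.2 = 0} ∩ Sq =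
        {((0 : ℝ), (0 : ℝ)),
          (Real.sqrt (1 - 4 * q / (p - q)), -Real.sqrt (1 - 4 * q / (p - q))),
          (-Real.sqrt (1 - 4 * q / (p - q)), Real.sqrt (1 - 4 * q / (p - q)))} := by
  have hc : 0 < p - q := by linarith
  set A := Real.sqrt (1 - 4 * q / (p - q)) with hAdef
  set B := Real.sqrt (5 + 4 * q / (p - q)) with hBdef
  have hxpos : 0 < 1 - 4 * q / (p - q) := by
    rw [sub_pos, div_lt_one hc]; linarith
  have hA0 : 0 < A := Real.sqrt_pos.mpr hxpos
  have hA2 : A ^ 2 = 1 - 4 * q / (p - q) := Real.sq_sqrt hxpos.le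
  have hA2' : A ^ 2 * (p - q) = p - 5 * q := by
    rw [hA2]; field_simp; ring
  have hA21 : A ^ 2 < 1 := by
    rw [hA2]; have : 0 < 4 * q / (p - q) := by positivity
    linarith
  have hA1 : A < 1 := by nlinarith [hA21, hA0, sq_nonneg (A - 1)]
  have hB2 : B ^ 2 = 5 + 4 * q / (p - q) := Real.sq_sqrt (by positivity)
  have hB2' : B ^ 2 * (p - q) = 5 * p - q := by
    rw [hB2]; field_simp; ring
  have hB0 : 0 ≤ B := Real.sqrt_nonneg _
  have hB21 : 4 < B ^ 2 := by
    rw [hB2]; have : 0 < 4 * q / (p - q) := by positivity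
    linarith
  have hB1 : 1 < B := by nlinarith [hB21, hB0]
  have hset : {x : ℝ × ℝ | Pq p q p q x.1 x.2 = 0 ∧ Qq p q p q x.1 x.2 = 0} =
      {((0 : ℝ), (0 : ℝ)), (A, -A), (-A, A), (B, B), (-B, -B)} := by
    ext ⟨x, y⟩
    simp only [Set.mem_setOf_eq, Set.mem_insert_iff, Set.mem_singleton_iff, Prod.mk.injEq]
    constructor
    · rintro ⟨hP, hQ⟩
      simp only [Pq, Qq, Nq, Kq] at hP hQ
      have h1 : (y - x) * ((p - q) * (3 + x * y) - 2 * (p + q)) = 0 := by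
        linear_combination (hP - hQ) / 2
      have h2 : (x + y) * ((p - q) * (3 - x * y) + 2 * (p + q)) = 0 := by
        linear_combination (hP + hQ) / 2
      rcases mul_eq_zero.mp h1 with h1' | h1'
      · have hyx : y = x := by linarith
        subst hyx
        rcases mul_eq_zero.mp h2 with h2' | h2'
        · left; constructor <;> linarith
        · have hx2 : y ^ 2 = B ^ 2 := by
            have h3 : y ^ 2 * (p - q) = B ^ 2 * (p - q) := by
              rw [hB2']; nlinarith [h2']
            exact mul_right_cancel₀ (ne_of_gt hc) h3
          have : (y - B) * (y + B) = 0 := by linear_combination hx2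
          rcases mul_eq_zero.mp this with h | h
          · right; right; right; left
            constructor <;> linarith
          · right; right; right; right
            constructor <;> linarith
      · rcases mul_eq_zero.mp h2 with h2' | h2'
        · have hyx : y = -x := by linarith
          subst hyx
          have hx2 : x ^ 2 = A ^ 2 := by
            have h3 : x ^ 2 * (p - q) = A ^ 2 * (p - q) := by
              rw [hA2']; nlinarith [h1']
            exact mul_right_cancel₀ (ne_of_gt hc) h3
          have : (x - A) * (x + A) = 0 := by linear_combination hx2
          rcases mul_eq_zero.mp this with h | h
          · right; left; constructor <;> linarith
          · right; right; left; constructor <;> linarith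
        · exfalso
          have : (6 : ℝ) * (p - q) = 0 := by linear_combination h1' + h2'
          linarith
    · rintro (⟨hx, hy⟩ | ⟨hx, hy⟩ | ⟨hx, hy⟩ | ⟨hx, hy⟩ | ⟨hx, hy⟩) <;> subst hx <;> subst hy <;>
        simp only [Pq, Qq, Nq, Kq] <;> constructor
      · ring
      · ring
      · linear_combination 2 * A * hA2'
      · linear_combination (-2 * A) * hA2'
      · linear_combination (-2 * A) * hA2'
      · linear_combination 2 * A * hA2'
      · linear_combination (-2 * B) * hB2'
      · linear_combination (-2 * B) * hB2'
      · linear_combination 2 * B * hB2'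
      · linear_combination 2 * B * hB2'
  refine ⟨hset, hA0, hA1, hB1, ?_, ?_⟩
  · have h0 : ((0 : ℝ), (0 : ℝ)) ∉ ({(A, -A), (-A, A), (B, B), (-B, -B)} : Set (ℝ × ℝ)) := by
      simp only [Set.mem_insert_iff, Set.mem_singleton_iff, Prod.mk.injEq, not_or]
      refine ⟨?_, ?_, ?_, ?_⟩ <;> rintro ⟨ha, hb⟩ <;> linarith
    have h1 : ((A : ℝ), -A) ∉ ({(-A, A), (B, B), (-B, -B)} : Set (ℝ × ℝ)) := by
      simp only [Set.mem_insert_iff, Set.mem_singleton_iff, Prod.mk.injEq, not_or]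
      refine ⟨?_, ?_, ?_⟩ <;> rintro ⟨ha, hb⟩ <;> linarith
    have h2 : ((-A : ℝ), A) ∉ ({(B, B), (-B, -B)} : Set (ℝ × ℝ)) := by
      simp only [Set.mem_insert_iff, Set.mem_singleton_iff, Prod.mk.injEq, not_or]
      refine ⟨?_, ?_⟩ <;> rintro ⟨ha, hb⟩ <;> linarith
    have h3 : ((B : ℝ), B) ∉ ({(-B, -B)} : Set (ℝ × ℝ)) := by
      simp only [Set.mem_singleton_iff, Prod.mk.injEq, not_and]
      intro ha; linarith
    rw [Set.ncard_insert_of_notMem h0 (Set.toFinite _),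
      Set.ncard_insert_of_notMem h1 (Set.toFinite _),
      Set.ncard_insert_of_notMem h2 (Set.toFinite _),
      Set.ncard_insert_of_notMem h3 (Set.toFinite _), Set.ncard_singleton]
  · rw [hset]
    ext ⟨x, y⟩
    simp only [Set.mem_inter_iff, Set.mem_insert_iff, Set.mem_singleton_iff, Prod.mk.injEq,
      Sq, Set.mem_setOf_eq, abs_lt]
    constructor
    · rintro ⟨(h | h | h | h | h), hs1, hs2⟩
      · exact Or.inl h
      · exact Or.inr (Or.inl h)
      · exact Or.inr (Or.inr h)
      · exfalso; obtain ⟨hx, hy⟩ := h; linarith [hs1.2]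
      · exfalso; obtain ⟨hx, hy⟩ := h; linarith [hs1.1]
    · rintro (⟨hx, hy⟩ | ⟨hx, hy⟩ | ⟨hx, hy⟩) <;> subst hx <;> subst hy
      · exact ⟨Or.inl ⟨rfl, rfl⟩, by norm_num, by norm_num⟩
      · exact ⟨Or.inr (Or.inl ⟨rfl, rfl⟩), ⟨by linarith, by linarith⟩, ⟨by linarith, by linarith⟩⟩
      · exact ⟨Or.inr (Or.inr (Or.inl ⟨rfl, rfl⟩)), ⟨by linarith, by linarith⟩, ⟨by linarith, by linarith⟩⟩
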